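/- If a + b > 0, a' + b' > 0, b > 0, b' > 0, a > a' and b ≤ b' with a > 0, then for every α ≥ 0 the welfare differential of (a, b) strictly exceeds that of (a', b'): (1/(1-α))((a+b)^{1-α} - b^{1-α}) > (1/(1-α))((a'+b')^{1-α} - b'^{1-α}) for α ≠ 1, and log((a+b)/b) > log((a'+b')/b') for α = 1. -/

import Mathlib

/-- Strict monotonicity of `x ↦ (1/p) * x ^ p` on positives, for `p ≠ 0`. -/
lemma aux_strict (p x y : ℝ) (hp : p ≠ 0) (hx : 0 < x) (hxy : x < y) :
    (1 / p) * x ^ p < (1 / p) * y ^ p := by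
  rcases hp.lt_or_gt with hneg | hpos
  · have h := Real.rpow_lt_rpow_of_neg hx hxy hneg
    have h1p : 1 / p < 0 := div_neg_of_pos_of_neg one_pos hneg
    nlinarith
  · have h := Real.rpow_lt_rpow hx.le hxy hpos
    have : 0 < 1 / p := by positivity
    nlinarith

/-- The shift inequality: `t ↦ (1/p)((a+t)^p - t^p)` is antitone on positives
for `p ≤ 1`, `p ≠ 0`. -/
lemma aux_shift (p a x y : ℝ) (hp : p ≠ 0) (hp1 : p ≤ 1) (ha : 0 < a)
    (hx : 0 < x) (hxy : x ≤ y) :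
    (1 / p) * ((a + y) ^ p - y ^ p) ≤ (1 / p) * ((a + x) ^ p - x ^ p) := by
  set g : ℝ → ℝ := fun t => (1 / p) * ((a + t) ^ p - t ^ p) with hg
  have hder : ∀ t : ℝ, 0 < t →
      HasDerivAt g ((a + t) ^ (p - 1) - t ^ (p - 1)) t := by
    intro t ht
    have h1 : HasDerivAt (fun t : ℝ => (a + t) ^ p) (p * (a + t) ^ (p - 1) * 1) t := by
      exact (Real.hasDerivAt_rpow_const (Or.inl (by linarith))).comp t
        ((hasDerivAt_id t).const_add a)
    have h2 : HasDerivAt (fun t : ℝ => t ^ p) (p * t ^ (p - 1)) t :=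
      Real.hasDerivAt_rpow_const (Or.inl ht.ne')
    have h3 := ((h1.sub h2).const_mul (1 / p))
    convert h3 using 1
    · rfl
    · rfl
    · rfl
    rw [mul_one, ← mul_sub, ← mul_assoc, one_div_mul_cancel hp]
    ring
  have hanti : AntitoneOn g (Set.Icc x y) := by
    apply antitoneOn_of_deriv_nonpos (convex_Icc x y)
    · intro t ht
      exact (hder t (lt_of_lt_of_le hx ht.1)).continuousAt.continuousWithinAt
    · intro t ht
      rw [interior_Icc] at ht
      exact (hder t (lt_trans hx ht.1)).differentiableAt.differentiableWithinAt
    · intro t ht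
      rw [interior_Icc] at ht
      have htpos : 0 < t := lt_trans hx ht.1
      rw [(hder t htpos).deriv]
      have := Real.rpow_le_rpow_of_nonpos htpos (by linarith : t ≤ a + t)
        (by linarith : p - 1 ≤ 0)
      linarith
  exact hanti (Set.left_mem_Icc.mpr hxy) (Set.right_mem_Icc.mpr hxy) hxy

/-- If a + b > 0, a' + b' > 0, b > 0, b' > 0, a > a', b ≤ b' and
a > 0, then for every α ≥ 0 the welfare differential of (a,b) strictly exceeds
that of (a',b'). -/
theorem differential_dominance (a b a' b' : ℝ)
    (hab : 0 < a + b) (hab' : 0 < a' + b') (hb : 0 < b) (hb' : 0 < b')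
    (haa : a' < a) (hbb : b ≤ b') (ha : 0 < a)
    (Δ : ℝ → ℝ → ℝ → ℝ)
    (hΔ : ∀ x y α, Δ x y α = if α = 1 then Real.log (x + y) - Real.log y
      else (1 / (1 - α)) * ((x + y) ^ (1 - α) - y ^ (1 - α))) :
    ∀ α : ℝ, 0 ≤ α → Δ a' b' α < Δ a b α := by
  intro α hα
  rw [hΔ, hΔ]
  by_cases h1 : α = 1
  · simp only [h1, if_pos rfl]
    rw [← Real.log_div hab'.ne' hb'.ne', ← Real.log_div hab.ne' hb.ne']
    apply Real.log_lt_log (by positivity)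
    rw [div_lt_div_iff₀ hb' hb]
    nlinarith
  · simp only [if_neg h1]
    set p := 1 - α with hp
    have hpne : p ≠ 0 := by
      simp only [hp]; intro h; apply h1; linarith
    have hp1 : p ≤ 1 := by simp only [hp]; linarith
    have step1 : (1 / p) * ((a' + b') ^ p - b' ^ p) < (1 / p) * ((a + b') ^ p - b' ^ p) := by
      have := aux_strict p (a' + b') (a + b') hpne hab' (by linarith)
      ring_nf
      ring_nf at this
      linarith
    have step2 := aux_shift p a b b' hpne hp1 ha hb hbb
    linarith
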